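/- Let A be a primitive stochastic matrix with classical index of primitivity p(A), and let E_A be the associated quantum channel with Kraus operators √(a_{ij})|i⟩⟨j|. Then E_A is primitive and q(E_A) = p(A) = i(A). -/

import Mathlib

open Matrix
open scoped ComplexOrder

variable {D : ℕ} {ι : Type*} [Fintype ι]

/-- The completely positive map with Kraus operators `A k`. -/
noncomputable def krausMap (A : ι → Matrix (Fin D) (Fin D) ℂ)
    (X : Matrix (Fin D) (Fin D) ℂ) : Matrix (Fin D) (Fin D) ℂ :=
  ∑ k, A k * X * (A k)ᴴ

/-- The product `A_{w 0} * A_{w 1} * ⋯ * A_{w (n-1)}` of Kraus operators along a word `w`. -/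
noncomputable def wordProd (A : ι → Matrix (Fin D) (Fin D) ℂ) {n : ℕ} (w : Fin n → ι) :
    Matrix (Fin D) (Fin D) ℂ :=
  (List.ofFn fun i => A (w i)).prod

/-- `S_n(A)`: the span of all products of exactly `n` Kraus operators. -/
noncomputable def krausSpan (A : ι → Matrix (Fin D) (Fin D) ℂ) (n : ℕ) :
    Submodule ℂ (Matrix (Fin D) (Fin D) ℂ) :=
  Submodule.span ℂ {M | ∃ w : Fin n → ι, M = wordProd A w}

/-- `H_n(A,φ) = S_n(A)|φ⟩`. -/
noncomputable def krausVecSpan (A : ι → Matrix (Fin D) (Fin D) ℂ) (n : ℕ)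
    (φ : Fin D → ℂ) : Submodule ℂ (Fin D → ℂ) :=
  Submodule.span ℂ {v | ∃ w : Fin n → ι, v = wordProd A w *ᵥ φ}

/-- A quantum channel is primitive if some power maps every pure state to a
positive definite (full-rank) operator. -/
def Primitive (A : ι → Matrix (Fin D) (Fin D) ℂ) : Prop :=
  ∃ n, ∀ φ : Fin D → ℂ, φ ≠ 0 →
    ((krausMap A)^[n] (vecMulVec φ (star φ))).PosDef

/-- `q(E_A)`: the quantum index of primitivity. -/
noncomputable def qIndex (A : ι → Matrix (Fin D) (Fin D) ℂ) : ℕ :=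
  sInf {n | ∀ φ : Fin D → ℂ, φ ≠ 0 →
    ((krausMap A)^[n] (vecMulVec φ (star φ))).PosDef}

/-- `i(A)`: the minimal `n` with `S_n(A) = M_D`. -/
noncomputable def iIndex (A : ι → Matrix (Fin D) (Fin D) ℂ) : ℕ :=
  sInf {n | krausSpan A n = ⊤}

/-- Trace preservation, `∑ k, A_k† A_k = 1`. -/
def TracePreserving (A : ι → Matrix (Fin D) (Fin D) ℂ) : Prop :=
  ∑ k, (A k)ᴴ * A k = 1


noncomputable def KK (a : Matrix (Fin D) (Fin D) ℝ) : Fin D × Fin D → Matrix (Fin D) (Fin D) ℂ :=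
  fun k => (Real.sqrt (a k.1 k.2) : ℂ) • Matrix.single k.1 k.2 (1 : ℂ)

lemma sandwich (i j : Fin D) (X : Matrix (Fin D) (Fin D) ℂ) :
    Matrix.single i j (1:ℂ) * X * Matrix.single j i (1:ℂ) = Matrix.single i i (X j j) := by
  ext p q
  simp only [mul_apply, Matrix.single, of_apply, ite_and, boole_mul, ite_mul, one_mul,
    zero_mul, mul_ite, mul_zero, mul_one]
  by_cases hp : p = i <;> by_cases hq : q = i <;>
    simp [hp, hq, eq_comm (a := i), Finset.sum_ite_eq, Finset.sum_ite_eq']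

lemma stdCT (i j : Fin D) : (Matrix.single i j (1:ℂ))ᴴ = Matrix.single j i (1:ℂ) := by
  ext p q
  simp [conjTranspose_apply, Matrix.single, and_comm, apply_ite]

lemma krausMap_KK (a : Matrix (Fin D) (Fin D) ℝ) (ha : ∀ i j, 0 ≤ a i j)
    (X : Matrix (Fin D) (Fin D) ℂ) :
    krausMap (KK a) X = Matrix.diagonal (fun i => ∑ j, ((a i j : ℝ) : ℂ) * X j j) := by
  have key : ∀ k : Fin D × Fin D, KK a k * X * (KK a k)ᴴ
      = ((a k.1 k.2 : ℝ) : ℂ) • Matrix.single k.1 k.1 (X k.2 k.2) := by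
    rintro ⟨i, j⟩
    simp only [KK, conjTranspose_smul, smul_mul_assoc, mul_smul_comm, smul_smul, stdCT,
      sandwich]
    congr 1
    rw [Complex.star_def, Complex.conj_ofReal, ← Complex.ofReal_mul,
      Real.mul_self_sqrt (ha i j)]
  rw [krausMap]
  simp only [key]
  ext p q
  rw [Fintype.sum_prod_type]
  by_cases hpq : p = q
  · subst hpq
    rw [diagonal_apply_eq]
    simp [Matrix.sum_apply, Matrix.single, ite_and, smul_eq_mul,
      Finset.sum_ite_eq, Finset.sum_ite_eq']
  · rw [diagonal_apply_ne _ hpq]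
    simp only [Matrix.sum_apply, Matrix.smul_apply, Matrix.single, of_apply]
    refine Finset.sum_eq_zero fun x _ => Finset.sum_eq_zero fun y _ => ?_
    rw [if_neg (by rintro ⟨rfl, rfl⟩; exact hpq rfl), smul_zero]

lemma iterate_KK (a : Matrix (Fin D) (Fin D) ℝ) (ha : ∀ i j, 0 ≤ a i j)
    (n : ℕ) (X : Matrix (Fin D) (Fin D) ℂ) :
    (krausMap (KK a))^[n+1] X
      = Matrix.diagonal (fun i => ∑ j, (((a ^ (n+1)) i j : ℝ) : ℂ) * X j j) := by
  induction n with
  | zero => rw [Function.iterate_one, krausMap_KK a ha]; simp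
  | succ n ih =>
    rw [Function.iterate_succ_apply', ih, krausMap_KK a ha]
    refine congrArg Matrix.diagonal (funext fun i => ?_)
    rw [show (a ^ (n+1+1)) = a * a ^ (n+1) from pow_succ' a (n+1)]
    simp only [diagonal_apply_eq, Matrix.mul_apply]
    push_cast
    simp only [Finset.mul_sum, Finset.sum_mul]
    rw [Finset.sum_comm]
    exact Finset.sum_congr rfl fun j _ => Finset.sum_congr rfl fun x _ => by ring

lemma pow_entry_nonneg (a : Matrix (Fin D) (Fin D) ℝ) (ha : ∀ i j, 0 ≤ a i j) :
    ∀ n i j, 0 ≤ (a ^ n) i j := by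
  intro n
  induction n with
  | zero => intro i j; rw [pow_zero]; by_cases h : i = j <;> simp [one_apply, h]
  | succ n ih =>
    intro i j
    rw [pow_succ, Matrix.mul_apply]
    exact Finset.sum_nonneg fun l _ => mul_nonneg (ih i l) (ha l j)

lemma q_succ (a : Matrix (Fin D) (Fin D) ℝ) (ha : ∀ i j, 0 ≤ a i j) (n : ℕ) :
    (∀ φ : Fin D → ℂ, φ ≠ 0 →
      ((krausMap (KK a))^[n+1] (vecMulVec φ (star φ))).PosDef)
    ↔ ∀ i j, 0 < (a ^ (n+1)) i j := by
  constructor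
  · intro h i j
    have hj : (Pi.single j 1 : Fin D → ℂ) ≠ 0 := by
      intro h0
      have := congrFun h0 j
      simp at this
    have hp := h _ hj
    rw [iterate_KK a ha, posDef_diagonal_iff] at hp
    have := hp i
    have heq : ∑ l, (((a ^ (n+1)) i l : ℝ) : ℂ)
          * (vecMulVec (Pi.single j 1) (star (Pi.single j 1)) l l)
        = (((a ^ (n+1)) i j : ℝ) : ℂ) := by
      rw [Fintype.sum_eq_single j]
      · simp [vecMulVec_apply]
      · intro l hl
        simp [vecMulVec_apply, Pi.single_apply, hl]
    rw [heq] at this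
    exact Complex.zero_lt_real.mp this
  · intro h φ hφ
    rw [iterate_KK a ha, posDef_diagonal_iff]
    intro i
    have heq : ∑ l, (((a ^ (n+1)) i l : ℝ) : ℂ) * (vecMulVec φ (star φ)) l l
        = (((∑ l, (a ^ (n+1)) i l * Complex.normSq (φ l)) : ℝ) : ℂ) := by
      push_cast
      refine Finset.sum_congr rfl fun l _ => ?_
      rw [vecMulVec_apply, Pi.star_apply]
      congr 1
      exact Complex.mul_conj (φ l)
    rw [heq, Complex.zero_lt_real]
    obtain ⟨l0, hl0⟩ := Function.ne_iff.mp hφ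
    refine Finset.sum_pos' (fun l _ => mul_nonneg (le_of_lt (h i l)) (Complex.normSq_nonneg _))
      ⟨l0, Finset.mem_univ _, mul_pos (h i l0) ?_⟩
    exact Complex.normSq_pos.mpr hl0

lemma pow_zero_pos_iff (a : Matrix (Fin D) (Fin D) ℝ) :
    (∀ i j, 0 < (a ^ 0) i j) ↔ ∀ i j : Fin D, i = j := by
  rw [pow_zero]
  constructor
  · intro h i j
    by_contra hne
    have := h i j
    rw [one_apply_ne hne] at this
    exact lt_irrefl 0 this
  · intro h i j
    have := h i j
    subst this
    simp [one_apply_eq]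

lemma q_zero (a : Matrix (Fin D) (Fin D) ℝ) :
    (∀ φ : Fin D → ℂ, φ ≠ 0 → (vecMulVec φ (star φ)).PosDef)
    ↔ ∀ i j : Fin D, i = j := by
  constructor
  · intro h i j
    by_contra hne
    have hi : (Pi.single i 1 : Fin D → ℂ) ≠ 0 := by
      intro h0; have := congrFun h0 i; simp at this
    have hj : (Pi.single j 1 : Fin D → ℂ) ≠ 0 := by
      intro h0; have := congrFun h0 j; simp at this
    have hp := (h _ hi).dotProduct_mulVec_pos hj
    have : star (Pi.single j 1 : Fin D → ℂ) ⬝ᵥ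
        (vecMulVec (Pi.single i 1) (star (Pi.single i 1)) *ᵥ Pi.single j 1) = 0 := by
      simp [dotProduct, mulVec, vecMulVec_apply, Pi.single_apply, Finset.mul_sum,
        Finset.sum_ite_eq, Finset.sum_ite_eq', hne, Ne.symm hne]
    rw [this] at hp
    exact lt_irrefl 0 hp
  · intro h φ hφ
    have hdiag : vecMulVec φ (star φ) = Matrix.diagonal (fun i => φ i * star (φ i)) := by
      ext p q
      have hpq : p = q := h p q
      subst hpq
      rw [diagonal_apply_eq, vecMulVec_apply, Pi.star_apply]
    rw [hdiag, posDef_diagonal_iff]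
    intro i
    obtain ⟨l0, hl0⟩ := Function.ne_iff.mp hφ
    have : i = l0 := h i l0
    subst this
    rw [show φ i * star (φ i) = ((Complex.normSq (φ i) : ℝ) : ℂ) from Complex.mul_conj _,
      Complex.zero_lt_real]
    exact Complex.normSq_pos.mpr hl0


lemma wordProd_nil (A : ι → Matrix (Fin D) (Fin D) ℂ)
    (w : Fin 0 → ι) : wordProd A w = 1 := by
  simp [wordProd]

lemma wordProd_cons (A : ι → Matrix (Fin D) (Fin D) ℂ) {n : ℕ}
    (k : ι) (w : Fin n → ι) :
    wordProd A (Fin.cons k w) = A k * wordProd A w := by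
  rw [wordProd, List.ofFn_succ]
  simp [Fin.cons_zero, Fin.cons_succ, wordProd]

lemma wordProd_eq (A : ι → Matrix (Fin D) (Fin D) ℂ) {n : ℕ}
    (w : Fin (n+1) → ι) :
    wordProd A w = A (w 0) * wordProd A (Fin.tail w) := by
  conv_lhs => rw [← Fin.cons_self_tail w]
  rw [wordProd_cons]

lemma wordProd_entry_pos (a : Matrix (Fin D) (Fin D) ℝ) (ha : ∀ i j, 0 ≤ a i j) :
    ∀ n (w : Fin n → Fin D × Fin D) p q, wordProd (KK a) w p q ≠ 0 → 0 < (a ^ n) p q := by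
  intro n
  induction n with
  | zero =>
    intro w p q h
    rw [wordProd_nil] at h
    by_cases hpq : p = q
    · subst hpq; simp [pow_zero, one_apply_eq]
    · rw [one_apply_ne hpq] at h; exact absurd rfl h
  | succ n ih =>
    intro w p q h
    rw [wordProd_eq, Matrix.mul_apply] at h
    obtain ⟨l, -, hl⟩ := Finset.exists_ne_zero_of_sum_ne_zero h
    have h1 : KK a (w 0) p l ≠ 0 := fun h0 => hl (by rw [h0, zero_mul])
    have h2 : wordProd (KK a) (Fin.tail w) l q ≠ 0 := fun h0 => hl (by rw [h0, mul_zero])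
    have hpl : (w 0).1 = p ∧ (w 0).2 = l ∧ a (w 0).1 (w 0).2 ≠ 0 := by
      by_contra hc
      apply h1
      simp only [KK, Matrix.smul_apply, Matrix.single, of_apply, smul_eq_mul]
      push_neg at hc
      by_cases c1 : (w 0).1 = p
      · by_cases c2 : (w 0).2 = l
        · have h0 := hc c1 c2
          rw [c1, c2] at h0
          simp [c1, c2, h0]
        · simp [c2]
      · simp [c1]
    obtain ⟨hp, hlv, hane⟩ := hpl
    have hpos : 0 < a p l := by
      rw [← hp, ← hlv]
      exact lt_of_le_of_ne (ha _ _) (Ne.symm hane)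
    have htail := ih (Fin.tail w) l q h2
    rw [show (a ^ (n+1)) = a * a ^ n from pow_succ' a n, Matrix.mul_apply]
    refine Finset.sum_pos' (fun m _ => mul_nonneg (ha p m) (pow_entry_nonneg a ha n m q))
      ⟨l, Finset.mem_univ _, mul_pos hpos htail⟩

lemma exists_word (a : Matrix (Fin D) (Fin D) ℝ) (ha : ∀ i j, 0 ≤ a i j) :
    ∀ n p q, 0 < (a ^ (n+1)) p q →
      ∃ (w : Fin (n+1) → Fin D × Fin D) (c : ℝ), 0 < c ∧
        wordProd (KK a) w = (c : ℂ) • Matrix.single p q (1:ℂ) := by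
  intro n
  induction n with
  | zero =>
    intro p q h
    rw [pow_one] at h
    refine ⟨fun _ => (p, q), Real.sqrt (a p q), Real.sqrt_pos.mpr h, ?_⟩
    rw [wordProd_eq, wordProd_nil, mul_one]
    rfl
  | succ n ih =>
    intro p q h
    rw [show (a ^ (n+1+1)) = a * a ^ (n+1) from pow_succ' a (n+1), Matrix.mul_apply] at h
    have hex : ∃ m, 0 < a p m * (a ^ (n+1)) m q := by
      by_contra hc
      push_neg at hc
      exact absurd (Finset.sum_nonpos fun m _ => hc m) (not_le.mpr h)
    obtain ⟨m, hm⟩ := hex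
    have h1 : 0 < a p m := by
      rcases (ha p m).lt_or_eq with h1 | h1
      · exact h1
      · rw [← h1, zero_mul] at hm; exact absurd hm (lt_irrefl 0)
    have h2 : 0 < (a ^ (n+1)) m q := by
      rcases (pow_entry_nonneg a ha (n+1) m q).lt_or_eq with h2 | h2
      · exact h2
      · rw [← h2, mul_zero] at hm; exact absurd hm (lt_irrefl 0)
    obtain ⟨w', c', hc', hw'⟩ := ih m q h2
    refine ⟨Fin.cons (p, m) w', Real.sqrt (a p m) * c',
      mul_pos (Real.sqrt_pos.mpr h1) hc', ?_⟩
    rw [wordProd_cons, hw']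
    show (Real.sqrt (a p m) : ℂ) • Matrix.single p m (1:ℂ) * ((c' : ℂ) • _) = _
    rw [smul_mul_assoc, mul_smul_comm, smul_smul, single_mul_single_same, mul_one]
    push_cast
    rfl


noncomputable def evalLM (p q : Fin D) :
    Matrix (Fin D) (Fin D) ℂ →ₗ[ℂ] ℂ where
  toFun M := M p q
  map_add' _ _ := rfl
  map_smul' _ _ := rfl

lemma span_eq_top_of_pos (a : Matrix (Fin D) (Fin D) ℝ) (ha : ∀ i j, 0 ≤ a i j)
    (n : ℕ) (h : ∀ i j, 0 < (a ^ (n+1)) i j) :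
    krausSpan (KK a) (n+1) = ⊤ := by
  rw [eq_top_iff]
  intro M _
  rw [matrix_eq_sum_single M]
  refine Submodule.sum_mem _ fun i _ => Submodule.sum_mem _ fun j _ => ?_
  obtain ⟨w, c, hc, hw⟩ := exists_word a ha n i j (h i j)
  have hmem : wordProd (KK a) w ∈ krausSpan (KK a) (n+1) :=
    Submodule.subset_span ⟨w, rfl⟩
  have : Matrix.single i j (M i j) = (M i j * (c : ℂ)⁻¹) • wordProd (KK a) w := by
    rw [hw, smul_smul, mul_assoc, inv_mul_cancel₀ (by exact_mod_cast ne_of_gt hc), mul_one,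
      smul_single, smul_eq_mul, mul_one]
  rw [this]
  exact Submodule.smul_mem _ _ hmem

lemma pos_of_span_eq_top (a : Matrix (Fin D) (Fin D) ℝ) (ha : ∀ i j, 0 ≤ a i j)
    (n : ℕ) (h : krausSpan (KK a) n = ⊤) : ∀ p q, 0 < (a ^ n) p q := by
  intro p q
  by_contra h0
  have hle : krausSpan (KK a) n ≤ LinearMap.ker (evalLM p q) := by
    rw [krausSpan, Submodule.span_le]
    rintro M ⟨w, rfl⟩
    simp only [SetLike.mem_coe, LinearMap.mem_ker]
    by_contra hne
    exact h0 (wordProd_entry_pos a ha n w p q hne)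
  have : Matrix.single p q (1:ℂ) ∈ LinearMap.ker (evalLM p q) :=
    hle (h ▸ Submodule.mem_top)
  rw [LinearMap.mem_ker] at this
  have h1 : evalLM p q (Matrix.single p q (1:ℂ)) = 1 := by
    show Matrix.single p q (1:ℂ) p q = 1
    simp [Matrix.single]
  rw [this] at h1
  exact (one_ne_zero : (1:ℂ) ≠ 0) h1.symm

lemma span_zero_eq_top_iff (a : Matrix (Fin D) (Fin D) ℝ) (ha : ∀ i j, 0 ≤ a i j) :
    krausSpan (KK a) 0 = ⊤ ↔ ∀ i j : Fin D, i = j := by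
  constructor
  · intro h
    exact (pow_zero_pos_iff a).mp (pos_of_span_eq_top a ha 0 h)
  · intro h
    rw [eq_top_iff]
    intro M _
    by_cases hD : Nonempty (Fin D)
    · obtain ⟨i0⟩ := hD
      have hM : M = M i0 i0 • (1 : Matrix (Fin D) (Fin D) ℂ) := by
        ext p q
        have hp : p = i0 := h p i0
        have hq : q = i0 := h q i0
        subst hp; subst hq
        simp [one_apply_eq]
      rw [hM]
      exact Submodule.smul_mem _ _
        (Submodule.subset_span ⟨fun i => i.elim0, (wordProd_nil _ _).symm⟩)
    · have hM : M = (1 : ℂ) • (1 : Matrix (Fin D) (Fin D) ℂ) := by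
        ext p q
        exact absurd ⟨p⟩ hD
      rw [hM]
      exact Submodule.smul_mem _ _
        (Submodule.subset_span ⟨fun i => i.elim0, (wordProd_nil _ _).symm⟩)

theorem stmt6 (D : ℕ) (a : Matrix (Fin D) (Fin D) ℝ)
    (ha : ∀ i j, 0 ≤ a i j) (hcol : ∀ j, ∑ i, a i j = 1)
    (hprim : ∃ n, ∀ i j, 0 < (a ^ n) i j) :
    Primitive (fun k : Fin D × Fin D =>
        (Real.sqrt (a k.1 k.2) : ℂ) • Matrix.single k.1 k.2 (1 : ℂ))
    ∧ qIndex (fun k : Fin D × Fin D =>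
        (Real.sqrt (a k.1 k.2) : ℂ) • Matrix.single k.1 k.2 (1 : ℂ))
      = sInf {n | ∀ i j, 0 < (a ^ n) i j}
    ∧ iIndex (fun k : Fin D × Fin D =>
        (Real.sqrt (a k.1 k.2) : ℂ) • Matrix.single k.1 k.2 (1 : ℂ))
      = sInf {n | ∀ i j, 0 < (a ^ n) i j} := by
  have hKK : (fun k : Fin D × Fin D =>
      (Real.sqrt (a k.1 k.2) : ℂ) • Matrix.single k.1 k.2 (1 : ℂ)) = KK a := rfl
  have hQ : {n : ℕ | ∀ φ : Fin D → ℂ, φ ≠ 0 →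
        ((krausMap (KK a))^[n] (vecMulVec φ (star φ))).PosDef}
      = {n : ℕ | ∀ i j, 0 < (a ^ n) i j} := by
    ext n
    cases n with
    | zero =>
      simp only [Set.mem_setOf_eq, Function.iterate_zero, id_eq]
      exact (q_zero a).trans (pow_zero_pos_iff a).symm
    | succ n =>
      exact q_succ a ha n
  have hI : {n : ℕ | krausSpan (KK a) n = ⊤} = {n : ℕ | ∀ i j, 0 < (a ^ n) i j} := by
    ext n
    cases n with
    | zero => exact (span_zero_eq_top_iff a ha).trans (pow_zero_pos_iff a).symm
    | succ n =>
      exact ⟨fun h => pos_of_span_eq_top a ha (n+1) h, fun h => span_eq_top_of_pos a ha n h⟩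
  rw [hKK]
  refine ⟨?_, ?_, ?_⟩
  · obtain ⟨n, hn⟩ := hprim
    exact ⟨n, (Set.ext_iff.mp hQ n).mpr hn⟩
  · unfold qIndex
    exact congrArg sInf hQ
  · unfold iIndex
    exact congrArg sInf hI
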